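/- In the nil-Hecke algebra on n strands (generated by commuting variables x_1,…,x_n and elements τ_1,…,τ_{n-1} with τ_k² = 0, braid relations among the τ_k, τ_k x_k = x_{k+1}τ_k - 1, x_k τ_k = τ_k x_{k+1} - 1, and τ commuting with distant variables), the element b = x_2 x_3² ⋯ x_n^{n-1} τ_{w_0}, where τ_{w_0} is the product of τ's along a reduced word of the longest element w_0 ∈ 𝔖_n, is an idempotent: b² = b. -/
import Mathlib

/-- The list `s_1 (s_2 s_1) (s_3 s_2 s_1) ⋯ (s_{n-1} ⋯ s_1)` (with `0`-based indices),
a reduced word for the longest element `w_0` of `𝔖_n`. -/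
def nilHeckeLongestWord (n : ℕ) : List ℕ :=
  (((List.range n).map fun j => (List.range j).reverse).flatten)

namespace NilHeckeProof

variable {A : Type} [Ring A]

/-- Complete homogeneous "polynomial" of degree `m` in the variables `x i`, `i ∈ L`. -/
def hp (x : ℕ → A) : ℕ → List ℕ → A
  | 0, _ => 1
  | _+1, [] => 0
  | m+1, i :: L => hp x (m+1) L + x i * hp x m (i :: L)
termination_by m L => (m, L.length)

lemma hp_zero (x : ℕ → A) (L : List ℕ) : hp x 0 L = 1 := by cases L <;> rw [hp]

lemma hp_nil (x : ℕ → A) (m : ℕ) : hp x (m+1) [] = 0 := by rw [hp]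

lemma hp_cons (x : ℕ → A) (m i : ℕ) (L : List ℕ) :
    hp x (m+1) (i :: L) = hp x (m+1) L + x i * hp x m (i :: L) := by rw [hp]

lemma hp_single (x : ℕ → A) (m i : ℕ) : hp x m [i] = x i ^ m := by
  induction m with
  | zero => simp [hp_zero]
  | succ m ih => rw [hp_cons, hp_nil, ih, pow_succ', zero_add]

lemma hp_comm (x : ℕ → A) (t : A) :
    ∀ N m (L : List ℕ), m + L.length ≤ N → (∀ i ∈ L, t * x i = x i * t) →
      t * hp x m L = hp x m L * t := by
  intro N
  induction N with
  | zero =>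
    intro m L hN h
    have hm : m = 0 := by omega
    simp [hm, hp_zero]
  | succ N ih =>
    intro m L hN h
    match m, L with
    | 0, L => simp [hp_zero]
    | m+1, [] => simp [hp_nil]
    | m+1, i :: L =>
      have h1 : t * hp x (m+1) L = hp x (m+1) L * t :=
        ih (m+1) L (by simp at hN ⊢; omega) (fun i hi => h i (by simp [hi]))
      have h2 : t * hp x m (i :: L) = hp x m (i :: L) * t :=
        ih m (i :: L) (by simp at hN ⊢; omega) h
      rw [hp_cons, mul_add, add_mul, h1, ← mul_assoc, h i (by simp), mul_assoc, h2,
        ← mul_assoc]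

lemma hp_peel2 (x : ℕ → A) (hxx : ∀ i j, x i * x j = x j * x i) (i j : ℕ) :
    ∀ m (L : List ℕ),
      hp x (m+1) (i :: j :: L) = hp x (m+1) (i :: L) + x j * hp x m (i :: j :: L) := by
  intro m
  induction m with
  | zero =>
    intro L
    rw [hp_cons, hp_cons, hp_cons, hp_zero, hp_zero, hp_zero]
    abel
  | succ m ih =>
    intro L
    conv_lhs => rw [hp_cons x (m+1) i (j :: L), hp_cons x (m+1) j L, ih L]
    conv_rhs => rw [hp_cons x (m+1) i L, hp_cons x m i (j :: L)]
    simp only [mul_add, ← mul_assoc]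
    rw [hxx i j]
    abel

/-- The Demazure-operator commutation identity
`h_{m+1}(x_{k+1}, x_L) τ_k = τ_k h_{m+1}(x_k, x_L) + h_m(x_k, x_{k+1}, x_L)`. -/
lemma demS (x : ℕ → A) (hxx : ∀ i j, x i * x j = x j * x i) (k : ℕ) (t : A)
    (ht : x (k+1) * t = t * x k + 1) (L : List ℕ)
    (hL : ∀ i ∈ L, t * x i = x i * t) :
    ∀ m, hp x (m+1) ((k+1) :: L) * t
        = t * hp x (m+1) (k :: L) + hp x m (k :: (k+1) :: L) := by
  have hcL : ∀ m, t * hp x m L = hp x m L * t :=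
    fun m => hp_comm x t (m + L.length) m L le_rfl hL
  intro m
  induction m with
  | zero =>
    rw [hp_cons, hp_zero, hp_zero, mul_one, add_mul, ← hcL 1, ht, hp_cons, hp_zero, mul_one]
    simp only [zero_add]
    rw [mul_add]
    abel
  | succ m ih =>
    conv_lhs => rw [hp_cons x (m+1) (k+1) L]
    rw [add_mul, mul_assoc, ih, ← hcL (m+2), mul_add, ← mul_assoc, ht]
    conv_rhs => rw [hp_cons x (m+1) k L, hp_peel2 x hxx k (k+1) m L]
    simp only [mul_add, add_mul, one_mul, mul_assoc]
    abel

def Dd (τ : ℕ → A) (m : ℕ) : A := (((List.range m).reverse).map τ).prod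

def Tmf (τ : ℕ → A) (m : ℕ) : A := ((nilHeckeLongestWord m).map τ).prod

def Xmf (x : ℕ → A) (m : ℕ) : A := ((List.range m).map fun i => x i ^ i).prod

lemma Dd_succ (τ : ℕ → A) (m : ℕ) : Dd τ (m+1) = τ m * Dd τ m := by
  simp [Dd, List.range_succ]

lemma Tmf_succ (τ : ℕ → A) (m : ℕ) : Tmf τ (m+1) = Tmf τ m * Dd τ m := by
  simp [Tmf, Dd, nilHeckeLongestWord, List.range_succ]

lemma Xmf_succ (x : ℕ → A) (m : ℕ) : Xmf x (m+1) = Xmf x m * x m ^ m := by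
  simp [Xmf, List.range_succ]

lemma prod_comm_right (τ : ℕ → A) (L : List ℕ) (a : A)
    (h : ∀ i ∈ L, τ i * a = a * τ i) : (L.map τ).prod * a = a * (L.map τ).prod := by
  have : Commute a (L.map τ).prod := by
    apply Commute.list_prod_right
    intro y hy
    simp only [List.mem_map] at hy
    obtain ⟨i, hi, rfl⟩ := hy
    exact (h i hi).symm
  exact this.symm

lemma shift (n : ℕ) (τ : ℕ → A)
    (hbraid : ∀ k, k + 2 < n → τ k * τ (k + 1) * τ k = τ (k + 1) * τ k * τ (k + 1))
    (hfar : ∀ k l, k + 2 ≤ l → τ k * τ l = τ l * τ k) :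
    ∀ m, m < n → ∀ k, 0 < k → k < m → Dd τ m * τ k = τ (k-1) * Dd τ m := by
  intro m
  induction m with
  | zero => intro _ k _ hk; omega
  | succ m ih =>
    intro hmn k hk0 hkm
    rcases Nat.lt_or_ge k m with h | h
    · rw [Dd_succ, mul_assoc, ih (by omega) k hk0 h, ← mul_assoc,
        ← hfar (k-1) m (by omega), mul_assoc]
    · have hk : k = m := by omega
      subst hk
      obtain ⟨q, rfl⟩ : ∃ q, k = q + 1 := ⟨k-1, by omega⟩
      have hc : Dd τ q * τ (q+1) = τ (q+1) * Dd τ q := by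
        apply prod_comm_right
        intro i hi
        simp only [List.mem_reverse, List.mem_range] at hi
        exact hfar i (q+1) (by omega)
      rw [Dd_succ, Dd_succ, mul_assoc, mul_assoc, hc, ← mul_assoc, ← mul_assoc,
        ← hbraid q (by omega)]
      simp only [Nat.add_sub_cancel, mul_assoc]

lemma kill (n : ℕ) (τ : ℕ → A)
    (hττ : ∀ k, k + 1 < n → τ k * τ k = 0)
    (hbraid : ∀ k, k + 2 < n → τ k * τ (k + 1) * τ k = τ (k + 1) * τ k * τ (k + 1))
    (hfar : ∀ k l, k + 2 ≤ l → τ k * τ l = τ l * τ k) :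
    ∀ m, m ≤ n → ∀ k, k + 1 < m → Tmf τ m * τ k = 0 := by
  intro m
  induction m with
  | zero => intro _ k hk; omega
  | succ m ih =>
    intro hmn k hk
    rw [Tmf_succ, mul_assoc]
    rcases Nat.eq_zero_or_pos k with rfl | hk0
    · obtain ⟨p, rfl⟩ : ∃ p, m = p + 1 := ⟨m-1, by omega⟩
      have hsplit : Dd τ (p+1) * τ 0
          = ((((List.range p).map Nat.succ).reverse).map τ).prod * (τ 0 * τ 0) := by
        rw [Dd, List.range_succ_eq_map]
        simp [mul_assoc]
      rw [hsplit, hττ 0 (by omega), mul_zero, mul_zero]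
    · rw [shift n τ hbraid hfar m (by omega) k hk0 (by omega), ← mul_assoc,
        ih (by omega) (k-1) (by omega), zero_mul]

lemma chain (n : ℕ) (x τ : ℕ → A)
    (hxx : ∀ i j, x i * x j = x j * x i)
    (hττ : ∀ k, k + 1 < n → τ k * τ k = 0)
    (hbraid : ∀ k, k + 2 < n → τ k * τ (k + 1) * τ k = τ (k + 1) * τ k * τ (k + 1))
    (hfar : ∀ k l, k + 2 ≤ l → τ k * τ l = τ l * τ k)
    (hτx₂ : ∀ k, k + 1 < n → x (k + 1) * τ k - τ k * x k = 1)
    (hτxfar : ∀ k l, l ≠ k → l ≠ k + 1 → τ k * x l = x l * τ k) :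
    ∀ j, j < n → ∀ k, k ≤ j →
      Tmf τ n * hp x k (List.range' k (j + 1 - k)) * Dd τ k = Tmf τ n := by
  intro j hj k
  induction k with
  | zero => intro _; simp [hp_zero, Dd]
  | succ k ih =>
    intro hkj
    set L := List.range' (k+2) (j-1-k) with hLdef
    have hcons1 : List.range' (k+1) (j + 1 - (k+1)) = (k+1) :: L := by
      have h1 : j + 1 - (k+1) = (j - 1 - k) + 1 := by omega
      rw [h1, List.range'_succ]
    have hcons2 : List.range' k (j + 1 - k) = k :: (k+1) :: L := by
      have h1 : j + 1 - k = (j - 1 - k) + 2 := by omega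
      rw [h1, List.range'_succ, List.range'_succ]
    have hLmem : ∀ i ∈ L, τ k * x i = x i * τ k := by
      intro i hi
      rw [hLdef, List.mem_range'_1] at hi
      exact hτxfar k i (by omega) (by omega)
    have ht : x (k+1) * τ k = τ k * x k + 1 := by
      have h2 := hτx₂ k (by omega)
      rw [sub_eq_iff_eq_add] at h2
      rw [h2, add_comm]
    have hd := demS x hxx k (τ k) ht L hLmem k
    calc Tmf τ n * hp x (k+1) (List.range' (k+1) (j + 1 - (k+1))) * Dd τ (k+1)
        = Tmf τ n * ((hp x (k+1) ((k+1) :: L) * τ k) * Dd τ k) := by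
          rw [hcons1, Dd_succ]; simp [mul_assoc]
      _ = Tmf τ n * ((τ k * hp x (k+1) (k :: L) + hp x k (k :: (k+1) :: L)) * Dd τ k) := by
          rw [hd]
      _ = Tmf τ n * τ k * (hp x (k+1) (k :: L) * Dd τ k)
            + Tmf τ n * hp x k (k :: (k+1) :: L) * Dd τ k := by
          simp only [add_mul, mul_add, mul_assoc]
      _ = Tmf τ n * hp x k (k :: (k+1) :: L) * Dd τ k := by
          rw [kill n τ hττ hbraid hfar n le_rfl k (by omega), zero_mul, zero_add]
      _ = Tmf τ n := by rw [← hcons2]; exact ih (by omega)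

lemma word_mem (m i : ℕ) (hi : i ∈ nilHeckeLongestWord m) : i + 2 ≤ m := by
  simp only [nilHeckeLongestWord, List.mem_flatten, List.mem_map] at hi
  obtain ⟨l, ⟨j, hj, rfl⟩, hil⟩ := hi
  simp only [List.mem_reverse, List.mem_range] at hil
  simp only [List.mem_range] at hj
  omega

lemma claim (n : ℕ) (x τ : ℕ → A)
    (hxx : ∀ i j, x i * x j = x j * x i)
    (hττ : ∀ k, k + 1 < n → τ k * τ k = 0)
    (hbraid : ∀ k, k + 2 < n → τ k * τ (k + 1) * τ k = τ (k + 1) * τ k * τ (k + 1))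
    (hfar : ∀ k l, k + 2 ≤ l → τ k * τ l = τ l * τ k)
    (hτx₂ : ∀ k, k + 1 < n → x (k + 1) * τ k - τ k * x k = 1)
    (hτxfar : ∀ k l, l ≠ k → l ≠ k + 1 → τ k * x l = x l * τ k) :
    ∀ m, m ≤ n → Tmf τ n * Xmf x m * Tmf τ m = Tmf τ n := by
  intro m
  induction m with
  | zero => intro _; simp [Xmf, Tmf, nilHeckeLongestWord]
  | succ m ih =>
    intro hmn
    have hcx : Tmf τ m * x m ^ m = x m ^ m * Tmf τ m := by
      apply prod_comm_right τ (nilHeckeLongestWord m)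
      intro i hi
      have hi2 : i + 2 ≤ m := word_mem m i hi
      have hbase : Commute (τ i) (x m) := hτxfar i m (by omega) (by omega)
      exact hbase.pow_right m
    have hone : m + 1 - m = 1 := by omega
    calc Tmf τ n * Xmf x (m+1) * Tmf τ (m+1)
        = Tmf τ n * Xmf x m * ((x m ^ m * Tmf τ m) * Dd τ m) := by
          rw [Xmf_succ, Tmf_succ]; simp [mul_assoc]
      _ = Tmf τ n * Xmf x m * ((Tmf τ m * x m ^ m) * Dd τ m) := by rw [hcx]
      _ = (Tmf τ n * Xmf x m * Tmf τ m) * (x m ^ m * Dd τ m) := by simp [mul_assoc]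
      _ = Tmf τ n * (x m ^ m * Dd τ m) := by rw [ih (by omega)]
      _ = Tmf τ n * hp x m (List.range' m (m + 1 - m)) * Dd τ m := by
          rw [hone, List.range'_one, hp_single, mul_assoc]
      _ = Tmf τ n := chain n x τ hxx hττ hbraid hfar hτx₂ hτxfar m (by omega) m le_rfl

end NilHeckeProof

/-- In the nil-Hecke algebra on `n` strands (generated by commuting variables
`x_1, …, x_n` and elements `τ_1, …, τ_{n-1}` with `τ_k² = 0`, braid relations among the
`τ_k`, `τ_k x_{k+1} - x_k τ_k = 1 = x_{k+1} τ_k - τ_k x_k`, and `τ` commuting with distant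
variables), the element `b = x_2 x_3² ⋯ x_n^{n-1} τ_{w_0}`, where `τ_{w_0}` is the product
of `τ`'s along a reduced word of the longest element `w_0 ∈ 𝔖_n`, is an idempotent:
`b * b = b`.  (All indices are `0`-based, so `x_2 x_3² ⋯ x_n^{n-1} = ∏_{i<n} x_i^i`.) -/
theorem nilHecke_idempotent
    (A : Type) [Ring A] (n : ℕ) (x τ : ℕ → A)
    (hxx : ∀ i j, x i * x j = x j * x i)
    (hττ : ∀ k, k + 1 < n → τ k * τ k = 0)
    (hbraid : ∀ k, k + 2 < n → τ k * τ (k + 1) * τ k = τ (k + 1) * τ k * τ (k + 1))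
    (hfar : ∀ k l, k + 2 ≤ l → τ k * τ l = τ l * τ k)
    (hτx₁ : ∀ k, k + 1 < n → τ k * x (k + 1) - x k * τ k = 1)
    (hτx₂ : ∀ k, k + 1 < n → x (k + 1) * τ k - τ k * x k = 1)
    (hτxfar : ∀ k l, l ≠ k → l ≠ k + 1 → τ k * x l = x l * τ k) :
    (((List.range n).map fun i => x i ^ i).prod * ((nilHeckeLongestWord n).map τ).prod) *
        (((List.range n).map fun i => x i ^ i).prod * ((nilHeckeLongestWord n).map τ).prod) =
      ((List.range n).map fun i => x i ^ i).prod * ((nilHeckeLongestWord n).map τ).prod := by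
  show (NilHeckeProof.Xmf x n * NilHeckeProof.Tmf τ n) *
      (NilHeckeProof.Xmf x n * NilHeckeProof.Tmf τ n)
    = NilHeckeProof.Xmf x n * NilHeckeProof.Tmf τ n
  have h := NilHeckeProof.claim n x τ hxx hττ hbraid hfar hτx₂ hτxfar n le_rfl
  calc NilHeckeProof.Xmf x n * NilHeckeProof.Tmf τ n *
        (NilHeckeProof.Xmf x n * NilHeckeProof.Tmf τ n)
      = NilHeckeProof.Xmf x n * (NilHeckeProof.Tmf τ n * NilHeckeProof.Xmf x n *
          NilHeckeProof.Tmf τ n) := by simp [mul_assoc]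
    _ = NilHeckeProof.Xmf x n * NilHeckeProof.Tmf τ n := by rw [h]
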